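/- Let s ≥ 0 be a real number and let a,b ∈ 𝔹² satisfy |a + is| = √(1+s²), |b − is| = √(1+s²), Im a > 0 and Im b < 0 (so a and b lie on opposite boundary arcs of the lens-shaped domain B(−is,√(1+s²)) ∩ B(is,√(1+s²)) ⊆ closure(𝔹²), which is symmetric with respect to the real axis and bounded by two circular arcs with endpoints −1 and 1). Then the hyperbolic midpoint m of a and b (for the hyperbolic metric of 𝔹²) is real, i.e., Im m = 0. -/

import Mathlib

open ComplexConjugate

/-- Minkowski-space key lemma: a null vector orthogonal to a timelike vector is zero
(we only need the last component). -/
lemma minkowski_key (w0 w1 w2 z0 z1 z2 d : ℝ) (hd : 0 < d)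
    (hdz : z0 ^ 2 - z1 ^ 2 - z2 ^ 2 = d)
    (h1 : w0 ^ 2 - w1 ^ 2 - w2 ^ 2 = 0)
    (h2 : w0 * z0 - w1 * z1 - w2 * z2 = 0) : w2 = 0 := by
  have hT : w0 ^ 2 * d + (w1 * z2 - w2 * z1) ^ 2 = 0 := by
    linear_combination (-(w0 ^ 2)) * hdz + (w0 * z0 + w1 * z1 + w2 * z2) * h2 -
      (z1 ^ 2 + z2 ^ 2) * h1
  have hw0 : w0 ^ 2 ≤ 0 := by nlinarith [sq_nonneg (w1 * z2 - w2 * z1)]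
  have hw0' : w0 = 0 := by nlinarith [sq_nonneg w0]
  have h3 : w2 ^ 2 ≤ 0 := by nlinarith [sq_nonneg w1]
  nlinarith [sq_nonneg w2]

/-- The hyperbolic metric of the unit disk. -/
noncomputable def rho (x y : ℂ) : ℝ :=
  2 * Real.arsinh (‖x - y‖ /
    Real.sqrt ((1 - ‖x‖ ^ 2) * (1 - ‖y‖ ^ 2)))

/-- cosh of the hyperbolic metric. -/
lemma cosh_rho (x y : ℂ) :
    Real.cosh (rho x y) = 1 + 2 * (‖x - y‖ /
      Real.sqrt ((1 - ‖x‖ ^ 2) * (1 - ‖y‖ ^ 2))) ^ 2 := by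
  have h : rho x y = 2 * Real.arsinh (‖x - y‖ /
      Real.sqrt ((1 - ‖x‖ ^ 2) * (1 - ‖y‖ ^ 2))) := rfl
  rw [h, Real.cosh_two_mul, Real.cosh_arsinh, Real.sinh_arsinh,
    Real.sq_sqrt (by positivity)]
  ring

theorem stmt11 (s : ℝ) (hs : 0 ≤ s) (a b : ℂ)
    (ha : ‖a‖ < 1) (hb : ‖b‖ < 1)
    (haV : ‖a + Complex.I * (s : ℂ)‖ = Real.sqrt (1 + s ^ 2))
    (hbV : ‖b - Complex.I * (s : ℂ)‖ = Real.sqrt (1 + s ^ 2))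
    (haIm : 0 < a.im) (hbIm : b.im < 0)
    (m : ℂ) (hm : ‖m‖ < 1)
    (hm1 : rho a m = rho a b / 2) (hm2 : rho m b = rho a b / 2) :
    m.im = 0 := by
  have hA2 : (‖a‖) ^ 2 = a.re ^ 2 + a.im ^ 2 := by
    rw [Complex.sq_norm, Complex.normSq_apply]; ring
  have hB2 : (‖b‖) ^ 2 = b.re ^ 2 + b.im ^ 2 := by
    rw [Complex.sq_norm, Complex.normSq_apply]; ring
  have hM2 : (‖m‖) ^ 2 = m.re ^ 2 + m.im ^ 2 := by
    rw [Complex.sq_norm, Complex.normSq_apply]; ring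
  obtain ⟨A, hAdef⟩ : ∃ A : ℝ, A = 1 - ‖a‖ ^ 2 := ⟨_, rfl⟩
  obtain ⟨B, hBdef⟩ : ∃ B : ℝ, B = 1 - ‖b‖ ^ 2 := ⟨_, rfl⟩
  obtain ⟨M, hMdef⟩ : ∃ M : ℝ, M = 1 - ‖m‖ ^ 2 := ⟨_, rfl⟩
  obtain ⟨c, hcdef⟩ : ∃ c : ℝ, c = Real.cosh (rho a b / 2) := ⟨_, rfl⟩
  have hApos : 0 < A := by rw [hAdef]; nlinarith [norm_nonneg a]
  have hBpos : 0 < B := by rw [hBdef]; nlinarith [norm_nonneg b]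
  have hMpos : 0 < M := by rw [hMdef]; nlinarith [norm_nonneg m]
  -- circle conditions
  have haV2 : ‖a + Complex.I * (s : ℂ)‖ ^ 2 = 1 + s ^ 2 := by
    rw [haV, Real.sq_sqrt (by positivity)]
  have hbV2 : ‖b - Complex.I * (s : ℂ)‖ ^ 2 = 1 + s ^ 2 := by
    rw [hbV, Real.sq_sqrt (by positivity)]
  rw [Complex.sq_norm, Complex.normSq_apply] at haV2 hbV2
  simp only [Complex.add_re, Complex.add_im, Complex.sub_re, Complex.sub_im,
    Complex.mul_re, Complex.mul_im, Complex.I_re, Complex.I_im,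
    Complex.ofReal_re, Complex.ofReal_im, mul_zero, zero_mul, mul_one, one_mul,
    zero_add, add_zero, zero_sub, sub_zero, neg_zero] at haV2 hbV2
  have hAs : A = 2 * s * a.im := by
    rw [hAdef, hA2]; linear_combination -haV2
  have hBs : B = -(2 * s * b.im) := by
    rw [hBdef, hB2]; linear_combination -hbV2
  have hc1 : 1 ≤ c := by rw [hcdef]; exact Real.one_le_cosh _
  have hcpos : 0 < c := lt_of_lt_of_le zero_lt_one hc1
  have hAM : (0:ℝ) < A * M := mul_pos hApos hMpos
  have hMB : (0:ℝ) < M * B := mul_pos hMpos hBpos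
  have hABpos : (0:ℝ) < A * B := mul_pos hApos hBpos
  -- the three Gram equations
  have E1 : 2 * (‖a - m‖) ^ 2 = (c - 1) * (A * M) := by
    have h := cosh_rho a m
    rw [← hAdef, ← hMdef, hm1, ← hcdef, div_pow, Real.sq_sqrt hAM.le] at h
    have hcan : (‖a - m‖) ^ 2 / (A * M) * (A * M) = (‖a - m‖) ^ 2 :=
      div_mul_cancel₀ _ hAM.ne'
    linear_combination (-2 : ℝ) * hcan - (A * M) * h
  have E2 : 2 * (‖m - b‖) ^ 2 = (c - 1) * (M * B) := by
    have h := cosh_rho m b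
    rw [← hMdef, ← hBdef, hm2, ← hcdef, div_pow, Real.sq_sqrt hMB.le] at h
    have hcan : (‖m - b‖) ^ 2 / (M * B) * (M * B) = (‖m - b‖) ^ 2 :=
      div_mul_cancel₀ _ hMB.ne'
    linear_combination (-2 : ℝ) * hcan - (M * B) * h
  have E3 : 2 * (‖a - b‖) ^ 2 = (2 * c ^ 2 - 2) * (A * B) := by
    have h := cosh_rho a b
    have h4 : rho a b = 2 * (rho a b / 2) := by ring
    have h5 : Real.cosh (rho a b) = 2 * c ^ 2 - 1 := by
      rw [h4, Real.cosh_two_mul, hcdef]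
      linear_combination -(Real.cosh_sq (rho a b / 2))
    rw [h5, ← hAdef, ← hBdef, div_pow, Real.sq_sqrt hABpos.le] at h
    have hcan : (‖a - b‖) ^ 2 / (A * B) * (A * B) = (‖a - b‖) ^ 2 :=
      div_mul_cancel₀ _ hABpos.ne'
    linear_combination (-2 : ℝ) * hcan - (A * B) * h
  -- squared distances in coordinates
  have dam : (‖a - m‖) ^ 2 = (a.re - m.re) ^ 2 + (a.im - m.im) ^ 2 := by
    rw [Complex.sq_norm, Complex.normSq_apply, Complex.sub_re, Complex.sub_im]; ring
  have dmb : (‖m - b‖) ^ 2 = (m.re - b.re) ^ 2 + (m.im - b.im) ^ 2 := by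
    rw [Complex.sq_norm, Complex.normSq_apply, Complex.sub_re, Complex.sub_im]; ring
  have dab : (‖a - b‖) ^ 2 = (a.re - b.re) ^ 2 + (a.im - b.im) ^ 2 := by
    rw [Complex.sq_norm, Complex.normSq_apply, Complex.sub_re, Complex.sub_im]; ring
  rw [dam] at E1; rw [dmb] at E2; rw [dab] at E3
  have hAc : A = 1 - (a.re ^ 2 + a.im ^ 2) := by rw [hAdef, hA2]
  have hBc : B = 1 - (b.re ^ 2 + b.im ^ 2) := by rw [hBdef, hB2]
  have hMc : M = 1 - (m.re ^ 2 + m.im ^ 2) := by rw [hMdef, hM2]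
  -- Gram equations in Minkowski form
  have G1 : (1 + (a.re ^ 2 + a.im ^ 2)) * (1 + (m.re ^ 2 + m.im ^ 2)) -
      4 * (a.re * m.re + a.im * m.im) = A * M * c := by
    linear_combination E1 - (1 - (m.re ^ 2 + m.im ^ 2)) * hAc - A * hMc
  have G2 : (1 + (m.re ^ 2 + m.im ^ 2)) * (1 + (b.re ^ 2 + b.im ^ 2)) -
      4 * (m.re * b.re + m.im * b.im) = M * B * c := by
    linear_combination E2 - (1 - (b.re ^ 2 + b.im ^ 2)) * hMc - M * hBc
  have G3 : (1 + (a.re ^ 2 + a.im ^ 2)) * (1 + (b.re ^ 2 + b.im ^ 2)) -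
      4 * (a.re * b.re + a.im * b.im) = A * B * (2 * c ^ 2 - 1) := by
    linear_combination E3 - (1 - (b.re ^ 2 + b.im ^ 2)) * hAc - A * hBc
  have hAsq : (1 - (a.re ^ 2 + a.im ^ 2)) ^ 2 = A ^ 2 := by rw [hAc]
  have hBsq : (1 - (b.re ^ 2 + b.im ^ 2)) ^ 2 = B ^ 2 := by rw [hBc]
  have hMsq : (1 - (m.re ^ 2 + m.im ^ 2)) ^ 2 = M ^ 2 := by rw [hMc]
  have hdz : (1 + (m.re ^ 2 + m.im ^ 2)) ^ 2 - (2 * m.re) ^ 2 - (2 * m.im) ^ 2 = M ^ 2 := by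
    linear_combination hMsq
  have h1 : (B * M * (1 + (a.re ^ 2 + a.im ^ 2)) + A * M * (1 + (b.re ^ 2 + b.im ^ 2)) -
      2 * c * A * B * (1 + (m.re ^ 2 + m.im ^ 2))) ^ 2 -
      (2 * (B * M * a.re + A * M * b.re - 2 * c * A * B * m.re)) ^ 2 -
      (2 * (B * M * a.im + A * M * b.im - 2 * c * A * B * m.im)) ^ 2 = 0 := by
    linear_combination (B^2 * M^2) * hAsq + (A^2 * M^2) * hBsq + (4 * c^2 * A^2 * B^2) * hMsq +
      (2 * A * B * M^2) * G3 - (4 * c * A * B^2 * M) * G1 - (4 * c * A^2 * B * M) * G2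
  have h2 : (B * M * (1 + (a.re ^ 2 + a.im ^ 2)) + A * M * (1 + (b.re ^ 2 + b.im ^ 2)) -
      2 * c * A * B * (1 + (m.re ^ 2 + m.im ^ 2))) * (1 + (m.re ^ 2 + m.im ^ 2)) -
      (2 * (B * M * a.re + A * M * b.re - 2 * c * A * B * m.re)) * (2 * m.re) -
      (2 * (B * M * a.im + A * M * b.im - 2 * c * A * B * m.im)) * (2 * m.im) = 0 := by
    linear_combination (B * M) * G1 + (A * M) * G2 - (2 * c * A * B) * hMsq
  have hkey := minkowski_key _ _ _ _ _ _ (M ^ 2) (by positivity) hdz h1 h2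
  have hfin : (c * A * B) * m.im = 0 := by
    linear_combination (-(1:ℝ)/4) * hkey + (M * a.im / 2) * hBs + (M * b.im / 2) * hAs
  have hcab : c * A * B ≠ 0 := ne_of_gt (mul_pos (mul_pos hcpos hApos) hBpos)
  exact (mul_eq_zero.mp hfin).resolve_left hcab
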